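/- In a finite two-player zero-sum perfect-information game, if h is a node controlled by player i, then the set of children of h that can be chosen at h by some pure-strategy subgame-perfect equilibrium equals the set of children whose backward-induction value is optimal for player i among all children of h. -/
import Mathlib


set_option linter.unusedVariables false

/-- A finite game tree with `n` players: each internal node is controlled by a
player in `Fin n` and has `k+1` children; leaves carry a payoff vector. -/
inductive GameTree (n : ℕ) : Type
  | leaf (u : Fin n → ℝ) : GameTree n
  | node (p : Fin n) (k : ℕ) (c : Fin (k + 1) → GameTree n) : GameTree n

/-- A pure strategy profile: a choice of child at every internal node. -/
inductive PureProfile {n : ℕ} : GameTree n → Type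
  | leaf {u : Fin n → ℝ} : PureProfile (.leaf u)
  | node {p : Fin n} {k : ℕ} {c : Fin (k + 1) → GameTree n}
      (ch : Fin (k + 1)) (sub : ∀ j, PureProfile (c j)) :
      PureProfile (.node p k c)

/-- The payoff vector induced by a pure strategy profile. -/
def payoff {n : ℕ} : {t : GameTree n} → PureProfile t → Fin n → ℝ
  | .leaf u, .leaf, i => u i
  | .node _ _ _, .node ch sub, i => payoff (sub ch) i

/-- `Dev i g g'` : `g'` is a unilateral deviation of `g` by player `i`
(they agree at every node not controlled by `i`). -/
def Dev {n : ℕ} (i : Fin n) : {t : GameTree n} → PureProfile t → PureProfile t → Prop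
  | .leaf _, _, _ => True
  | .node p _ _, .node ch sub, .node ch' sub' =>
      (p ≠ i → ch' = ch) ∧ ∀ j, Dev i (sub j) (sub' j)

/-- Subgame-perfect equilibrium for pure profiles: at every node, no player can
strictly improve her payoff in the subgame rooted there by a unilateral deviation. -/
def IsSPE {n : ℕ} : {t : GameTree n} → PureProfile t → Prop
  | .leaf _, _ => True
  | .node p k c, .node ch sub =>
      (∀ j, IsSPE (sub j)) ∧
      ∀ (i : Fin n) (g' : PureProfile (.node p k c)),
        Dev i (.node ch sub) g' →
        payoff g' i ≤ payoff (PureProfile.node (p := p) ch sub) i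

/-- The payoffs of leaves of the game tree. -/
def IsLeafPayoff {n : ℕ} : GameTree n → (Fin n → ℝ) → Prop
  | .leaf u, v => u = v
  | .node _ _ c, v => ∃ j, IsLeafPayoff (c j) v

/-- Zero-sum condition for two-player games: at every leaf the two payoffs sum to zero. -/
def ZeroSum (t : GameTree 2) : Prop :=
  ∀ v, IsLeafPayoff t v → v 0 + v 1 = 0

/-- Backward-induction (minimax) value of a two-player zero-sum tree,
measured as the payoff to player `0` (the maximizer); player `1` minimizes. -/
noncomputable def biValue : GameTree 2 → ℝ
  | .leaf u => u 0
  | .node p _ c =>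
      if p = 0 then Finset.univ.sup' Finset.univ_nonempty fun j => biValue (c j)
      else Finset.univ.inf' Finset.univ_nonempty fun j => biValue (c j)

/-- Addresses of nodes in a game tree. -/
inductive Addr {n : ℕ} : GameTree n → Type
  | nil {t : GameTree n} : Addr t
  | cons {p : Fin n} {k : ℕ} {c : Fin (k + 1) → GameTree n}
      (j : Fin (k + 1)) (a : Addr (c j)) : Addr (.node p k c)

/-- The subtree rooted at a given address. -/
def subtreeAt {n : ℕ} : {t : GameTree n} → Addr t → GameTree n
  | t, .nil => t
  | .node _ _ _, .cons j a => subtreeAt (t := _) a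

/-- The child index (as a natural number) chosen by a pure profile at the node
sitting at a given address (`none` if the address points to a leaf). -/
def choiceAt {n : ℕ} : {t : GameTree n} → PureProfile t → Addr t → Option ℕ
  | .leaf _, _, .nil => none
  | .node _ _ _, .node ch _, .nil => some ch.val
  | .node _ _ _, .node _ sub, .cons j a => choiceAt (sub j) a


section Aux

open GameTree PureProfile

lemma dev_refl {n : ℕ} (i : Fin n) : ∀ {t : GameTree n} (g : PureProfile t), Dev i g g := by
  intro t g
  induction g with
  | leaf => trivial
  | node ch sub ih => exact ⟨fun _ => rfl, fun j => ih j⟩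

lemma payoff_isLeafPayoff {n : ℕ} : ∀ {t : GameTree n} (g : PureProfile t),
    IsLeafPayoff t (fun i => payoff g i) := by
  intro t g
  induction g with
  | leaf => rfl
  | node ch sub ih => exact ⟨ch, ih ch⟩

lemma zeroSum_child {p : Fin 2} {k : ℕ} {c : Fin (k+1) → GameTree 2}
    (hz : ZeroSum (.node p k c)) (j : Fin (k+1)) : ZeroSum (c j) :=
  fun v hv => hz v ⟨j, hv⟩

lemma payoff_one {t : GameTree 2} (hz : ZeroSum t) (g : PureProfile t) :
    payoff g 1 = - payoff g 0 := by
  have := hz _ (payoff_isLeafPayoff g)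
  linarith

lemma payoff_node {n : ℕ} {p : Fin n} {k : ℕ} {c : Fin (k+1) → GameTree n}
    (ch : Fin (k+1)) (sub : ∀ j, PureProfile (c j)) (i : Fin n) :
    payoff (PureProfile.node (p := p) ch sub) i = payoff (sub ch) i := rfl

lemma subtreeAt_nil {n : ℕ} {t : GameTree n} : subtreeAt (t := t) Addr.nil = t := by
  cases t <;> rfl

lemma biValue_node {p : Fin 2} {k : ℕ} {c : Fin (k+1) → GameTree 2} :
    biValue (.node p k c) =
      (if p = 0 then Finset.univ.sup' Finset.univ_nonempty fun j => biValue (c j)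
       else Finset.univ.inf' Finset.univ_nonempty fun j => biValue (c j)) := by
  rw [biValue]

lemma fin2_cases (p : Fin 2) : p = 0 ∨ p = 1 := by omega

lemma spe_value : ∀ {t : GameTree 2}, ZeroSum t → ∀ (g : PureProfile t), IsSPE g → payoff g 0 = biValue t := by
  intro t
  induction t with
  | leaf u => intro hz g _; cases g; rfl
  | node p k c ih =>
    intro hz g hspe
    cases g with | node ch sub =>
    obtain ⟨hs, hdev⟩ := hspe
    have hch : ∀ j, payoff (sub j) 0 = biValue (c j) :=
      fun j => ih j (zeroSum_child hz j) (sub j) (hs j)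
    have hpay : payoff (PureProfile.node (p := p) ch sub) 0 = biValue (c ch) := hch ch
    rw [hpay, biValue_node]
    rcases fin2_cases p with hp | hp
    · have key : ∀ j, biValue (c j) ≤ biValue (c ch) := by
        intro j
        have hd : Dev 0 (PureProfile.node (p := p) ch sub) (PureProfile.node (p := p) j sub) :=
          ⟨fun h => absurd hp h, fun i => dev_refl 0 (sub i)⟩
        have h1 := hdev 0 _ hd
        rw [payoff_node, payoff_node, hch j, hch ch] at h1
        exact h1
      rw [if_pos hp]
      exact le_antisymm (Finset.le_sup' (fun j => biValue (c j)) (Finset.mem_univ ch))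
        (Finset.sup'_le _ _ fun j _ => key j)
    · have key : ∀ j, biValue (c ch) ≤ biValue (c j) := by
        intro j
        have hd : Dev 1 (PureProfile.node (p := p) ch sub) (PureProfile.node (p := p) j sub) :=
          ⟨fun h => absurd hp h, fun i => dev_refl 1 (sub i)⟩
        have h1 := hdev 1 _ hd
        rw [payoff_one hz, payoff_one hz, neg_le_neg_iff, payoff_node, payoff_node,
          hch j, hch ch] at h1
        exact h1
      rw [if_neg (by omega : ¬ p = 0)]
      exact le_antisymm (Finset.le_inf' _ _ fun j _ => key j)
        (Finset.inf'_le (fun j => biValue (c j)) (Finset.mem_univ ch))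

/-- Player 0 cannot get more than the value by unilateral deviation. -/
def Good0 {t : GameTree 2} (g : PureProfile t) : Prop :=
  ∀ g', Dev 0 g g' → payoff g' 0 ≤ biValue t

/-- Player 1 cannot push player 0's payoff below the value by unilateral deviation. -/
def Good1 {t : GameTree 2} (g : PureProfile t) : Prop :=
  ∀ g', Dev 1 g g' → biValue t ≤ payoff g' 0

lemma good_payoff {t : GameTree 2} {g : PureProfile t} (h0 : Good0 g) (h1 : Good1 g) :
    payoff g 0 = biValue t :=
  le_antisymm (h0 g (dev_refl 0 g)) (h1 g (dev_refl 1 g))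

lemma spe_good0 {t : GameTree 2} (hz : ZeroSum t) (g : PureProfile t) (h : IsSPE g) :
    Good0 g := by
  intro g' hd
  rw [← spe_value hz g h]
  cases t with
  | leaf u => cases g; cases g'; exact le_refl _
  | node p k c => cases g with | node ch sub => exact h.2 0 g' hd

lemma spe_good1 {t : GameTree 2} (hz : ZeroSum t) (g : PureProfile t) (h : IsSPE g) :
    Good1 g := by
  intro g' hd
  rw [← spe_value hz g h]
  cases t with
  | leaf u => cases g; cases g'; exact le_refl _
  | node p k c =>
    cases g with | node ch sub =>
    have h1 := h.2 1 g' hd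
    rw [payoff_one hz, payoff_one hz, neg_le_neg_iff] at h1
    exact h1

lemma spe_node {p : Fin 2} {k : ℕ} {c : Fin (k+1) → GameTree 2}
    (hz : ZeroSum (.node p k c)) (sub : ∀ j, PureProfile (c j))
    (hspe : ∀ j, IsSPE (sub j)) (h0 : ∀ j, Good0 (sub j)) (h1 : ∀ j, Good1 (sub j))
    (ch : Fin (k+1)) (hopt : biValue (c ch) = biValue (.node p k c)) :
    IsSPE (PureProfile.node (p := p) ch sub) := by
  refine ⟨hspe, ?_⟩
  intro i g' hd
  cases g' with | node ch' sub' =>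
  obtain ⟨hch', hsub'⟩ := hd
  have hpay : payoff (sub ch) 0 = biValue (c ch) :=
    good_payoff (h0 ch) (h1 ch)
  rcases fin2_cases i with hi | hi
  · subst hi
    show payoff (sub' ch') 0 ≤ payoff (sub ch) 0
    rw [hpay, hopt]
    have hb : payoff (sub' ch') 0 ≤ biValue (c ch') := h0 ch' (sub' ch') (hsub' ch')
    rcases fin2_cases p with hp | hp
    · refine hb.trans ?_
      rw [biValue_node, if_pos hp]
      exact Finset.le_sup' (fun j => biValue (c j)) (Finset.mem_univ ch')
    · have he : ch' = ch := hch' (by omega)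
      subst he
      exact hb.trans (le_of_eq hopt)
  · subst hi
    have hz1 := payoff_one hz (PureProfile.node (p := p) ch' sub')
    have hz2 := payoff_one hz (PureProfile.node (p := p) ch sub)
    rw [hz1, hz2, neg_le_neg_iff]
    show payoff (sub ch) 0 ≤ payoff (sub' ch') 0
    rw [hpay, hopt]
    have hb : biValue (c ch') ≤ payoff (sub' ch') 0 := h1 ch' (sub' ch') (hsub' ch')
    rcases fin2_cases p with hp | hp
    · have he : ch' = ch := hch' (by omega)
      subst he
      exact le_trans (le_of_eq hopt.symm) hb
    · refine le_trans ?_ hb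
      rw [biValue_node, if_neg (by omega : ¬ p = 0)]
      exact Finset.inf'_le (fun j => biValue (c j)) (Finset.mem_univ ch')

lemma exists_opt (p : Fin 2) (k : ℕ) (c : Fin (k+1) → GameTree 2) :
    ∃ j : Fin (k+1), biValue (c j) = biValue (.node p k c) := by
  rcases fin2_cases p with hp | hp
  · obtain ⟨j, -, hj⟩ := Finset.exists_mem_eq_sup' (Finset.univ_nonempty (α := Fin (k+1)))
      (fun j => biValue (c j))
    exact ⟨j, by rw [biValue_node, if_pos hp, hj]⟩
  · obtain ⟨j, -, hj⟩ := Finset.exists_mem_eq_inf' (Finset.univ_nonempty (α := Fin (k+1)))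
      (fun j => biValue (c j))
    exact ⟨j, by rw [biValue_node, if_neg (by omega : ¬ p = 0), hj]⟩

noncomputable def optChoice (p : Fin 2) (k : ℕ) (c : Fin (k+1) → GameTree 2) : Fin (k+1) :=
  (exists_opt p k c).choose

lemma optChoice_spec (p : Fin 2) (k : ℕ) (c : Fin (k+1) → GameTree 2) :
    biValue (c (optChoice p k c)) = biValue (.node p k c) :=
  (exists_opt p k c).choose_spec

noncomputable def biProf : (t : GameTree 2) → PureProfile t
  | .leaf _ => .leaf
  | .node p k c => .node (optChoice p k c) (fun j => biProf (c j))

lemma biProf_good : ∀ (t : GameTree 2), Good0 (biProf t) ∧ Good1 (biProf t) := by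
  intro t
  induction t with
  | leaf u =>
    constructor <;> intro g' hd <;> cases g' <;> exact le_refl _
  | node p k c ih =>
    have hun : biProf (.node p k c) = .node (optChoice p k c) (fun j => biProf (c j)) := by
      rw [biProf]
    constructor
    · intro g' hd
      rw [hun] at hd
      cases g' with | node ch' sub' =>
      obtain ⟨hch', hsub'⟩ := hd
      have hb : payoff (sub' ch') 0 ≤ biValue (c ch') := (ih ch').1 _ (hsub' ch')
      show payoff (sub' ch') 0 ≤ _
      rcases fin2_cases p with hp | hp
      · refine hb.trans ?_
        rw [biValue_node, if_pos hp]
        exact Finset.le_sup' (fun j => biValue (c j)) (Finset.mem_univ ch')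
      · have he : ch' = optChoice p k c := hch' (by omega)
        subst he
        exact hb.trans (le_of_eq (optChoice_spec p k c))
    · intro g' hd
      rw [hun] at hd
      cases g' with | node ch' sub' =>
      obtain ⟨hch', hsub'⟩ := hd
      have hb : biValue (c ch') ≤ payoff (sub' ch') 0 := (ih ch').2 _ (hsub' ch')
      show _ ≤ payoff (sub' ch') 0
      rcases fin2_cases p with hp | hp
      · have he : ch' = optChoice p k c := hch' (by omega)
        subst he
        exact le_trans (le_of_eq (optChoice_spec p k c).symm) hb
      · refine le_trans ?_ hb
        rw [biValue_node, if_neg (by omega : ¬ p = 0)]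
        exact Finset.inf'_le (fun j => biValue (c j)) (Finset.mem_univ ch')

lemma biProf_spe : ∀ (t : GameTree 2), ZeroSum t → IsSPE (biProf t) := by
  intro t
  induction t with
  | leaf u => intro _; trivial
  | node p k c ih =>
    intro hz
    have hun : biProf (.node p k c) = .node (optChoice p k c) (fun j => biProf (c j)) := by
      rw [biProf]
    rw [hun]
    exact spe_node hz _ (fun j => ih j (zeroSum_child hz j))
      (fun j => (biProf_good (c j)).1) (fun j => (biProf_good (c j)).2)
      _ (optChoice_spec p k c)

lemma spe_choice_opt : ∀ {t : GameTree 2} (ad : Addr t), ZeroSum t →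
    ∀ {p : Fin 2} {k : ℕ} {c : Fin (k+1) → GameTree 2},
      subtreeAt ad = .node p k c → ∀ (a : Fin (k+1)) (g : PureProfile t),
      IsSPE g → choiceAt g ad = some a.val → biValue (c a) = biValue (.node p k c) := by
  intro t ad
  induction ad with
  | nil =>
    intro hz p k c hsub a g hspe hch
    rw [subtreeAt_nil] at hsub
    subst hsub
    cases g with | node ch sub =>
    have hcc : ch = a := by
      have h1 : (some ch.val : Option ℕ) = some a.val := hch
      exact Fin.ext (Option.some_injective _ h1)
    subst hcc
    have h1 : payoff (sub ch) 0 = biValue (c ch) :=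
      spe_value (zeroSum_child hz ch) (sub ch) (hspe.1 ch)
    have h2 : payoff (PureProfile.node (p := p) ch sub) 0 = biValue (.node p k c) :=
      spe_value hz _ hspe
    rw [payoff_node] at h2
    rw [← h1, h2]
  | @cons q m d j rest ih =>
    intro hz p k c hsub a g hspe hch
    cases g with | node ch sub =>
    exact ih (zeroSum_child hz j) hsub a (sub j) (hspe.1 j) hch

lemma exists_spe_choice : ∀ {t : GameTree 2} (ad : Addr t), ZeroSum t →
    ∀ {p : Fin 2} {k : ℕ} {c : Fin (k+1) → GameTree 2},
      subtreeAt ad = .node p k c → ∀ (a : Fin (k+1)),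
      biValue (c a) = biValue (.node p k c) →
      ∃ g : PureProfile t, IsSPE g ∧ choiceAt g ad = some a.val := by
  intro t ad
  induction ad with
  | nil =>
    intro hz p k c hsub a hopt
    rw [subtreeAt_nil] at hsub
    subst hsub
    refine ⟨.node a (fun j => biProf (c j)), ?_, rfl⟩
    exact spe_node hz _ (fun j => biProf_spe (c j) (zeroSum_child hz j))
      (fun j => (biProf_good (c j)).1) (fun j => (biProf_good (c j)).2) a hopt
  | @cons q m d j rest ih =>
    intro hz p k c hsub a hopt
    obtain ⟨gj, hgj, hgch⟩ := ih (zeroSum_child hz j) hsub a hopt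
    classical
    have hsj : Function.update (fun i => biProf (d i)) j gj j = gj := by
      simp
    refine ⟨.node (optChoice q m d) (Function.update (fun i => biProf (d i)) j gj), ?_, ?_⟩
    · refine spe_node hz _ ?_ ?_ ?_ _ (optChoice_spec q m d)
      · intro i
        by_cases hij : i = j
        · subst hij; rw [hsj]; exact hgj
        · rw [Function.update_of_ne hij]
          exact biProf_spe (d i) (zeroSum_child hz i)
      · intro i
        by_cases hij : i = j
        · subst hij; rw [hsj]; exact spe_good0 (zeroSum_child hz i) gj hgj
        · rw [Function.update_of_ne hij]
          exact (biProf_good (d i)).1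
      · intro i
        by_cases hij : i = j
        · subst hij; rw [hsj]; exact spe_good1 (zeroSum_child hz i) gj hgj
        · rw [Function.update_of_ne hij]
          exact (biProf_good (d i)).2
    · show choiceAt (Function.update (fun i => biProf (d i)) j gj j) rest = some a.val
      rw [hsj]
      exact hgch

end Aux

theorem stmt13 (t : GameTree 2) (hz : ZeroSum t)
    (ad : Addr t) (p : Fin 2) (k : ℕ) (c : Fin (k + 1) → GameTree 2)
    (hsub : subtreeAt ad = .node p k c) (a : Fin (k + 1)) :
    (∃ g : PureProfile t, IsSPE g ∧ choiceAt g ad = some a.val) ↔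
      biValue (c a) =
        (if p = 0 then Finset.univ.sup' Finset.univ_nonempty fun j => biValue (c j)
         else Finset.univ.inf' Finset.univ_nonempty fun j => biValue (c j)) := by
  have hrw : (if p = 0 then Finset.univ.sup' Finset.univ_nonempty fun j => biValue (c j)
      else Finset.univ.inf' Finset.univ_nonempty fun j => biValue (c j)) =
      biValue (.node p k c) := biValue_node.symm
  rw [hrw]
  constructor
  · rintro ⟨g, hspe, hch⟩
    exact spe_choice_opt ad hz hsub a g hspe hch
  · intro hopt
    exact exists_spe_choice ad hz hsub a hopt
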